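/- The class of recognizable tree languages is the smallest class of tree languages containing the finite tree languages and closed under union, tree concatenation and tree concatenation closure: (1) every finite tree language is recognizable, and the recognizable tree languages are closed under union, tree concatenation, and tree concatenation closure; (2) if C is any class of tree languages that contains every finite tree language and is closed under union, under the binary tree concatenations L_1 ·_a L_2 (for symbols a of rank 0), and under tree concatenation closure L^{*a}, then every recognizable tree language belongs to C. -/

import Mathlib

/-- Trees whose nodes carry labels from the universal symbol supply `ℕ`
(a node of rank `k` carries a symbol and `k` direct subtrees); a ranked
alphabet then singles out which symbols may be used at which rank. -/
inductive UTree : Type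
  | node (k : ℕ) (a : ℕ) (ts : Fin k → UTree) : UTree

def UTree.leaf (a : ℕ) : UTree := .node 0 a Fin.elim0

/-- `WF rk t`: every node of `t` of rank `k` is labeled by a symbol of `Σ_k = rk k`,
i.e. `t ∈ T_Σ` for the ranked alphabet `rk`. -/
inductive WF (rk : ℕ → Set ℕ) : UTree → Prop
  | node {k a : ℕ} {ts : Fin k → UTree} :
      a ∈ rk k → (∀ i, WF rk (ts i)) → WF rk (.node k a ts)

/-- A (total) deterministic bottom-up transition table together with final states. -/
structure DBUA (Q : Type) where
  δ : ℕ → ℕ → List Q → Q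
  F : Set Q

def DBUA.run {Q : Type} (M : DBUA Q) : UTree → Q
  | .node k a ts => M.δ k a (List.ofFn fun i => M.run (ts i))

/-- A tree language over the ranked alphabet `rk` is recognizable if it is the set
of well-formed trees accepted by some deterministic bottom-up finite tree
automaton with finitely many states. -/
def RecognizableU (rk : ℕ → Set ℕ) (L : Set UTree) : Prop :=
  ∃ (Q : Type) (_ : Fintype Q) (M : DBUA Q), L = {t | WF rk t ∧ M.run t ∈ M.F}

/-- A ranked alphabet: each `Σ_k` is finite and only finitely many are nonempty. -/
def IsRankedAlphabet (rk : ℕ → Set ℕ) : Prop :=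
  (⋃ k, rk k).Finite ∧ {k | (rk k).Nonempty}.Finite

/-- `SubstRel g t s`: `s` is obtained from `t` by replacing each rank-0 leaf
labeled `a` by some tree of `g a` (different occurrences may get different trees). -/
inductive SubstRel (g : ℕ → Set UTree) : UTree → UTree → Prop
  | leaf {a : ℕ} {s : UTree} : s ∈ g a → SubstRel g (.leaf a) s
  | node {k : ℕ} {a : ℕ} {ts ss : Fin (k + 1) → UTree} :
      (∀ i, SubstRel g (ts i) (ss i)) → SubstRel g (.node (k + 1) a ts) (.node (k + 1) a ss)

/-- The binary tree concatenation `L₁ ·_a L₂`. -/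
def concatAt (a : ℕ) (L₁ L₂ : Set UTree) : Set UTree :=
  {s | ∃ t ∈ L₁, SubstRel (fun b => {u | (b = a ∧ u ∈ L₂) ∨ (b ≠ a ∧ u = UTree.leaf b)}) t s}

/-- `X₀ = {a}`, `X_{n+1} = X_n ·_a (L ∪ {a})`. -/
def closIter (a : ℕ) (L : Set UTree) : ℕ → Set UTree
  | 0 => {UTree.leaf a}
  | n + 1 => concatAt a (closIter a L n) (L ∪ {UTree.leaf a})

/-- The tree concatenation closure `L^{*a} = ⋃_n X_n`. -/
def concatClosure (a : ℕ) (L : Set UTree) : Set UTree :=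
  ⋃ n, closIter a L n

section Lemmas
open UTree

def gOf (a : ℕ) (V : Set UTree) : ℕ → Set UTree :=
  fun b => {u | (b = a ∧ u ∈ V) ∨ (b ≠ a ∧ u = UTree.leaf b)}

lemma concatAt_eq (a : ℕ) (U V : Set UTree) :
    concatAt a U V = {s | ∃ t ∈ U, SubstRel (gOf a V) t s} := rfl

lemma node0_eq_leaf (a : ℕ) (ts : Fin 0 → UTree) : UTree.node 0 a ts = UTree.leaf a := by
  unfold UTree.leaf; congr 1; funext i; exact i.elim0

lemma gOf_self (a : ℕ) (V : Set UTree) : gOf a V a = V := by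
  ext u; simp [gOf]

lemma gOf_ne {a b : ℕ} (V : Set UTree) (h : b ≠ a) : gOf a V b = {UTree.leaf b} := by
  ext u; simp [gOf, h]

lemma SubstRel.mono {g g' : ℕ → Set UTree} (hg : ∀ b, g b ⊆ g' b) {t s : UTree}
    (h : SubstRel g t s) : SubstRel g' t s := by
  induction h with
  | leaf h => exact .leaf (hg _ h)
  | node h ih => exact .node ih

lemma SubstRel.refl_of {g : ℕ → Set UTree} (hg : ∀ b, UTree.leaf b ∈ g b) (t : UTree) :
    SubstRel g t t := by
  induction t with
  | node k a ts ih =>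
    match k with
    | 0 => rw [node0_eq_leaf]; exact .leaf (hg a)
    | k + 1 => exact .node ih

lemma SubstRel.gOf_refl {a : ℕ} {V : Set UTree} (hV : UTree.leaf a ∈ V) (t : UTree) :
    SubstRel (gOf a V) t t := by
  refine SubstRel.refl_of (fun b => ?_) t
  by_cases hb : b = a
  · subst hb; exact Or.inl ⟨rfl, hV⟩
  · exact Or.inr ⟨hb, rfl⟩

lemma SubstRel.eq_of_id {g : ℕ → Set UTree} (hg : ∀ b u, u ∈ g b → u = UTree.leaf b)
    {t s : UTree} (h : SubstRel g t s) : s = t := by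
  induction h with
  | leaf h => exact hg _ _ h
  | node h ih => congr 1; funext i; exact ih i

lemma SubstRel.comp {g₁ g₂ : ℕ → Set UTree} {t u s : UTree}
    (h₁ : SubstRel g₁ t u) (h₂ : SubstRel g₂ u s) :
    SubstRel (fun b => {s' | ∃ u' ∈ g₁ b, SubstRel g₂ u' s'}) t s := by
  induction h₁ generalizing s with
  | @leaf b u h => exact .leaf ⟨u, h, h₂⟩
  | @node k b ts us h ih =>
    cases h₂ with
    | node h₂ => exact .node (fun i => ih i (h₂ i))
lemma substRel_leaf_iff {g : ℕ → Set UTree} {b : ℕ} {s : UTree} :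
    SubstRel g (UTree.leaf b) s ↔ s ∈ g b := by
  constructor
  · intro h
    cases h with
    | leaf h => exact h
  · exact .leaf

lemma subst_comp_gOf {a : ℕ} {V W : Set UTree} {t u s : UTree}
    (h₁ : SubstRel (gOf a V) t u) (h₂ : SubstRel (gOf a W) u s) :
    SubstRel (gOf a (concatAt a V W)) t s := by
  induction h₁ generalizing s with
  | @leaf b u h =>
    rcases h with ⟨rfl, hu⟩ | ⟨hb, rfl⟩
    · exact .leaf (Or.inl ⟨rfl, u, hu, h₂⟩)
    · rw [substRel_leaf_iff] at h₂
      rcases h₂ with ⟨h, -⟩ | ⟨-, rfl⟩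
      · exact absurd h hb
      · exact .leaf (Or.inr ⟨hb, rfl⟩)
  | @node k b ts us h ih =>
    cases h₂ with
    | node h₂ => exact .node (fun i => ih i (h₂ i))

lemma substRel_decomp {a : ℕ} {V W : Set UTree} {t s : UTree}
    (h : SubstRel (gOf a (concatAt a V W)) t s) :
    ∃ u, SubstRel (gOf a V) t u ∧ SubstRel (gOf a W) u s := by
  induction h with
  | @leaf b u h =>
    rcases h with ⟨rfl, u', hu', hsub⟩ | ⟨hb, rfl⟩
    · exact ⟨u', .leaf (Or.inl ⟨rfl, hu'⟩), hsub⟩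
    · exact ⟨UTree.leaf b, .leaf (Or.inr ⟨hb, rfl⟩), .leaf (Or.inr ⟨hb, rfl⟩)⟩
  | @node k b ts ss h ih =>
    choose us h1 h2 using ih
    exact ⟨UTree.node (k+1) b us, .node h1, .node h2⟩

lemma concat_assoc (a : ℕ) (U V W : Set UTree) :
    concatAt a (concatAt a U V) W = concatAt a U (concatAt a V W) := by
  ext s
  constructor
  · rintro ⟨u, ⟨t, ht, h1⟩, h2⟩
    exact ⟨t, ht, subst_comp_gOf h1 h2⟩
  · rintro ⟨t, ht, h⟩
    obtain ⟨u, h1, h2⟩ := substRel_decomp h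
    exact ⟨u, ⟨t, ht, h1⟩, h2⟩

lemma concat_mono_left {a : ℕ} {U U' : Set UTree} (V : Set UTree) (h : U ⊆ U') :
    concatAt a U V ⊆ concatAt a U' V := by
  rintro s ⟨t, ht, hs⟩; exact ⟨t, h ht, hs⟩

lemma concat_mono_right {a : ℕ} (U : Set UTree) {V V' : Set UTree} (h : V ⊆ V') :
    concatAt a U V ⊆ concatAt a U V' := by
  rintro s ⟨t, ht, hs⟩
  refine ⟨t, ht, hs.mono (fun b u hu => ?_)⟩
  rcases hu with ⟨rfl, hu⟩ | hu
  · exact Or.inl ⟨rfl, h hu⟩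
  · exact Or.inr hu

lemma concat_union_left (a : ℕ) (U₁ U₂ V : Set UTree) :
    concatAt a (U₁ ∪ U₂) V = concatAt a U₁ V ∪ concatAt a U₂ V := by
  ext s
  constructor
  · rintro ⟨t, ht | ht, hs⟩
    · exact Or.inl ⟨t, ht, hs⟩
    · exact Or.inr ⟨t, ht, hs⟩
  · rintro (⟨t, ht, hs⟩ | ⟨t, ht, hs⟩)
    · exact ⟨t, Or.inl ht, hs⟩
    · exact ⟨t, Or.inr ht, hs⟩

lemma concat_leaf_left (a : ℕ) (V : Set UTree) :
    concatAt a {UTree.leaf a} V = V := by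
  ext s
  constructor
  · rintro ⟨t, rfl, hs⟩
    rw [substRel_leaf_iff] at hs
    rcases hs with ⟨-, hs⟩ | ⟨h, -⟩
    · exact hs
    · exact absurd rfl h
  · intro hs
    exact ⟨UTree.leaf a, rfl, substRel_leaf_iff.2 (Or.inl ⟨rfl, hs⟩)⟩

lemma concat_leaf_right (a : ℕ) (U : Set UTree) :
    concatAt a U {UTree.leaf a} = U := by
  ext s
  constructor
  · rintro ⟨t, ht, hs⟩
    have : s = t := by
      refine hs.eq_of_id (fun b u hu => ?_)
      rcases hu with ⟨rfl, hu⟩ | ⟨-, hu⟩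
      · exact hu
      · exact hu
    rwa [this]
  · intro hs
    exact ⟨s, hs, SubstRel.gOf_refl (V := {UTree.leaf a}) rfl s⟩
lemma leaf_mem_closIter (a : ℕ) (L : Set UTree) : ∀ n, UTree.leaf a ∈ closIter a L n
  | 0 => rfl
  | n + 1 => ⟨UTree.leaf a, leaf_mem_closIter a L n,
      substRel_leaf_iff.2 (Or.inl ⟨rfl, Or.inr rfl⟩)⟩

lemma closIter_mono_succ (a : ℕ) (L : Set UTree) (n : ℕ) :
    closIter a L n ⊆ closIter a L (n + 1) := by
  intro s hs
  exact ⟨s, hs, SubstRel.gOf_refl (V := L ∪ {UTree.leaf a}) (Or.inr rfl) s⟩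

lemma closIter_mono (a : ℕ) (L : Set UTree) {m n : ℕ} (h : m ≤ n) :
    closIter a L m ⊆ closIter a L n := by
  induction h with
  | refl => exact subset_rfl
  | step _ ih => exact fun s hs => closIter_mono_succ _ _ _ (ih hs)

lemma concat_closIter (a : ℕ) (L : Set UTree) (m : ℕ) :
    ∀ n, concatAt a (closIter a L m) (closIter a L n) ⊆ closIter a L (m + n)
  | 0 => by rw [show closIter a L 0 = {UTree.leaf a} from rfl, concat_leaf_right]; exact subset_rfl
  | n + 1 => by
    show concatAt a (closIter a L m) (concatAt a (closIter a L n) (L ∪ {UTree.leaf a})) ⊆ _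
    rw [← concat_assoc]
    exact fun s hs => (concat_mono_left _ (concat_closIter a L m n)) hs

lemma subst_iUnion {a : ℕ} {D : ℕ → Set UTree} (hD : Monotone D) {t s : UTree}
    (h : SubstRel (gOf a (⋃ n, D n)) t s) : ∃ N, SubstRel (gOf a (D N)) t s := by
  induction h with
  | @leaf b u h =>
    rcases h with ⟨rfl, hu⟩ | ⟨hb, rfl⟩
    · obtain ⟨n, hn⟩ := Set.mem_iUnion.1 hu
      exact ⟨n, .leaf (Or.inl ⟨rfl, hn⟩)⟩
    · exact ⟨0, .leaf (Or.inr ⟨hb, rfl⟩)⟩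
  | @node k b ts ss h ih =>
    choose Ns hNs using ih
    refine ⟨Finset.univ.sup Ns, .node (fun i => ?_)⟩
    refine (hNs i).mono (fun b u hu => ?_)
    rcases hu with ⟨rfl, hu⟩ | hu
    · exact Or.inl ⟨rfl, hD (Finset.le_sup (Finset.mem_univ i)) hu⟩
    · exact Or.inr hu

lemma concat_closure_self (a : ℕ) (L : Set UTree) :
    concatAt a (concatClosure a L) (concatClosure a L) ⊆ concatClosure a L := by
  rintro s ⟨t, ht, hs⟩
  obtain ⟨m, hm⟩ := Set.mem_iUnion.1 ht
  obtain ⟨N, hN⟩ := subst_iUnion (fun i j hij => closIter_mono a L hij) hs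
  exact Set.mem_iUnion.2 ⟨m + N, concat_closIter a L m N ⟨t, hm, hN⟩⟩

lemma closIter_subset_closure (a : ℕ) (L : Set UTree) (n : ℕ) :
    closIter a L n ⊆ concatClosure a L :=
  fun s hs => Set.mem_iUnion.2 ⟨n, hs⟩

lemma leaf_mem_closure (a : ℕ) (L : Set UTree) : UTree.leaf a ∈ concatClosure a L :=
  closIter_subset_closure a L 0 rfl

lemma self_subset_closure (a : ℕ) (L : Set UTree) : L ⊆ concatClosure a L := by
  intro t ht
  refine closIter_subset_closure a L 1 ⟨UTree.leaf a, rfl, substRel_leaf_iff.2 ?_⟩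
  exact Or.inl ⟨rfl, Or.inl ht⟩

lemma clos_eq (a : ℕ) (L : Set UTree) :
    concatClosure a L = {UTree.leaf a} ∪ concatAt a L (concatClosure a L) := by
  apply Set.Subset.antisymm
  · intro s hs
    obtain ⟨n, hn⟩ := Set.mem_iUnion.1 hs
    clear hs
    induction n generalizing s with
    | zero => exact Or.inl hn
    | succ n ih =>
      obtain ⟨u, hu, hsub⟩ := hn
      rcases ih hu with rfl | ⟨t, ht, htsub⟩
      · rw [substRel_leaf_iff] at hsub
        rcases hsub with ⟨-, (hL | rfl)⟩ | ⟨h, -⟩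
        · refine Or.inr ⟨s, hL, SubstRel.gOf_refl (leaf_mem_closure a L) s⟩
        · exact Or.inl rfl
        · exact absurd rfl h
      · refine Or.inr ⟨t, ht, ?_⟩
        have step : SubstRel (gOf a (concatAt a (concatClosure a L) (L ∪ {UTree.leaf a}))) t s :=
          subst_comp_gOf htsub hsub
        refine step.mono (fun b u hu => ?_)
        rcases hu with ⟨rfl, hu⟩ | hu
        · refine Or.inl ⟨rfl, ?_⟩
          rcases hu with ⟨v, hv, hvsub⟩
          obtain ⟨m, hm⟩ := Set.mem_iUnion.1 hv
          exact closIter_subset_closure _ L (m+1) ⟨v, hm, hvsub⟩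
        · exact Or.inr hu
  · rintro s (rfl | hs)
    · exact leaf_mem_closure a L
    · exact concat_closure_self a L
        ((concat_mono_left _ (self_subset_closure a L)) hs)

lemma wf_subst_forward {rk : ℕ → Set ℕ} {a : ℕ} {V : Set UTree} {t s : UTree}
    (hV : ∀ u ∈ V, WF rk u) (ht : WF rk t) (h : SubstRel (gOf a V) t s) : WF rk s := by
  induction h with
  | @leaf b u h =>
    rcases h with ⟨rfl, hu⟩ | ⟨-, rfl⟩
    · exact hV _ hu
    · exact ht
  | @node k b ts ss h ih =>
    cases ht with
    | node hb hts => exact .node hb (fun i => ih i (hts i))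

lemma wf_subst_backward {rk : ℕ → Set ℕ} {a : ℕ} (ha : a ∈ rk 0) {V : Set UTree} {t s : UTree}
    (hs : WF rk s) (h : SubstRel (gOf a V) t s) : WF rk t := by
  induction h with
  | @leaf b u h =>
    rcases h with ⟨rfl, -⟩ | ⟨-, rfl⟩
    · exact .node ha (fun i => i.elim0)
    · exact hs
  | @node k b ts ss h ih =>
    cases hs with
    | node hb hss => exact .node hb (fun i => ih i (hss i))

lemma closure_wf {rk : ℕ → Set ℕ} {a : ℕ} (ha : a ∈ rk 0) {L : Set UTree}
    (hL : ∀ u ∈ L, WF rk u) : ∀ s ∈ concatClosure a L, WF rk s := by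
  have hn : ∀ n, ∀ s ∈ closIter a L n, WF rk s := by
    intro n
    induction n with
    | zero => rintro s rfl; exact .node ha (fun i => i.elim0)
    | succ n ih =>
      rintro s ⟨t, ht, hsub⟩
      refine wf_subst_forward (fun u hu => ?_) (ih t ht) hsub
      rcases hu with hu | rfl
      · exact hL u hu
      · exact .node ha (fun i => i.elim0)
  rintro s hs
  obtain ⟨n, hn'⟩ := Set.mem_iUnion.1 hs
  exact hn n s hn'
lemma run_node {Q : Type} (M : DBUA Q) (k a : ℕ) (ts : Fin k → UTree) :
    M.run (.node k a ts) = M.δ k a (List.ofFn fun i => M.run (ts i)) := rfl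

def subtreesSet : UTree → Set UTree
  | .node k a ts => insert (.node k a ts) (⋃ i, subtreesSet (ts i))

lemma subtreesSet_self (t : UTree) : t ∈ subtreesSet t := by
  cases t; exact Set.mem_insert _ _

lemma subtreesSet_finite (t : UTree) : (subtreesSet t).Finite := by
  induction t with
  | node k a ts ih => exact ((Set.finite_iUnion ih).insert _)

lemma subtreesSet_child {t : UTree} {k a : ℕ} {ts : Fin k → UTree}
    (h : UTree.node k a ts ∈ subtreesSet t) (i : Fin k) : ts i ∈ subtreesSet t := by
  induction t with
  | node k' a' ts' ih =>
    rcases Set.mem_insert_iff.1 h with h | h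
    · injection h with hk ha hts
      subst hk
      subst ha
      rw [heq_iff_eq] at hts
      subst hts
      exact Set.mem_insert_iff.2 (Or.inr (Set.mem_iUnion.2 ⟨i, subtreesSet_self _⟩))
    · obtain ⟨j, hj⟩ := Set.mem_iUnion.1 h
      exact Set.mem_insert_iff.2 (Or.inr (Set.mem_iUnion.2 ⟨j, ih j hj⟩))

lemma finite_recognizable (rk : ℕ → Set ℕ) (L : Set UTree) (hL : L.Finite)
    (hwf : ∀ t ∈ L, WF rk t) : RecognizableU rk L := by
  classical
  set T : Set UTree := ⋃ t ∈ L, subtreesSet t with hTdef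
  have hTfin : T.Finite := hL.biUnion (fun t _ => subtreesSet_finite t)
  have hLT : L ⊆ T := fun t ht => Set.mem_biUnion ht (subtreesSet_self t)
  have hclosed : ∀ (k a : ℕ) (ts : Fin k → UTree), UTree.node k a ts ∈ T → ∀ i, ts i ∈ T := by
    intro k a ts h i
    obtain ⟨u, hu, hsub⟩ := Set.mem_iUnion₂.1 h
    exact Set.mem_iUnion₂.2 ⟨u, hu, subtreesSet_child hsub i⟩
  haveI : Fintype ↥T := hTfin.fintype
  set M : DBUA (Option ↥T) :=
    ⟨fun k a qs =>
      if h : ∃ ts' : Fin k → ↥T, (UTree.node k a fun i => (ts' i : UTree)) ∈ T ∧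
          qs = List.ofFn (fun i => some (ts' i)) then
        some ⟨UTree.node k a fun i => (h.choose i : UTree), h.choose_spec.1⟩
      else none,
      {q | ∃ u : ↥T, q = some u ∧ (u : UTree) ∈ L}⟩ with hMdef
  have hrun : ∀ t, M.run t = if ht : t ∈ T then some ⟨t, ht⟩ else none := by
    intro t
    induction t with
    | node k a ts ih =>
      rw [run_node]
      by_cases hmem : UTree.node k a ts ∈ T
      · have hch : ∀ i, ts i ∈ T := hclosed _ _ _ hmem
        have hex : ∃ ts' : Fin k → ↥T, (UTree.node k a fun i => (ts' i : UTree)) ∈ T ∧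
            (List.ofFn fun i => M.run (ts i)) = List.ofFn (fun i => some (ts' i)) := by
          refine ⟨fun i => ⟨ts i, hch i⟩, hmem, ?_⟩
          congr 1
          funext i
          rw [ih i, dif_pos (hch i)]
        show dite _ _ _ = _
        rw [dif_pos hex, dif_pos hmem]
        have hvals : ∀ i, (hex.choose i : UTree) = ts i := by
          intro i
          have := congrFun (List.ofFn_inj.1 hex.choose_spec.2) i
          rw [ih i, dif_pos (hch i)] at this
          exact (congrArg Subtype.val (Option.some.inj this)).symm
        exact congrArg some (Subtype.ext (by show UTree.node k a _ = UTree.node k a ts; congr 1; funext i; exact hvals i))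
      · have hnex : ¬ ∃ ts' : Fin k → ↥T, (UTree.node k a fun i => (ts' i : UTree)) ∈ T ∧
            (List.ofFn fun i => M.run (ts i)) = List.ofFn (fun i => some (ts' i)) := by
          rintro ⟨ts', hT', hqs⟩
          have hvals : ∀ i, (ts' i : UTree) = ts i := by
            intro i
            have := congrFun (List.ofFn_inj.1 hqs) i
            rw [ih i] at this
            by_cases hti : ts i ∈ T
            · rw [dif_pos hti] at this
              exact (congrArg Subtype.val (Option.some.inj this)).symm
            · rw [dif_neg hti] at this
              exact absurd this (by simp)
          have : (UTree.node k a fun i => (ts' i : UTree)) = UTree.node k a ts := by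
            congr 1; funext i; exact hvals i
          rw [this] at hT'
          exact hmem hT'
        show dite _ _ _ = _
        rw [dif_neg hnex, dif_neg hmem]
  refine ⟨Option ↥T, inferInstance, M, ?_⟩
  ext t
  simp only [Set.mem_setOf_eq]
  constructor
  · intro ht
    refine ⟨hwf t ht, ?_⟩
    show M.run t ∈ M.F
    rw [hrun t, dif_pos (hLT ht)]
    exact ⟨⟨t, hLT ht⟩, rfl, ht⟩
  · rintro ⟨hwft, hF⟩
    rw [hrun t] at hF
    by_cases htT : t ∈ T
    · rw [dif_pos htT] at hF
      obtain ⟨u, hu, huL⟩ := hF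
      have : (u : UTree) = t := by
        have := Option.some.inj hu
        exact (congrArg Subtype.val this).symm
      rwa [this] at huL
    · rw [dif_neg htT] at hF
      obtain ⟨u, hu, -⟩ := hF
      exact absurd hu (by simp)
lemma union_recognizable (rk : ℕ → Set ℕ) (U V : Set UTree)
    (hU : RecognizableU rk U) (hV : RecognizableU rk V) : RecognizableU rk (U ∪ V) := by
  obtain ⟨Q₁, i₁, M₁, rfl⟩ := hU
  obtain ⟨Q₂, i₂, M₂, rfl⟩ := hV
  haveI := i₁; haveI := i₂
  set M : DBUA (Q₁ × Q₂) :=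
    ⟨fun k a qs => (M₁.δ k a (qs.map Prod.fst), M₂.δ k a (qs.map Prod.snd)),
     {q | q.1 ∈ M₁.F ∨ q.2 ∈ M₂.F}⟩ with hMdef
  have hrun : ∀ t, M.run t = (M₁.run t, M₂.run t) := by
    intro t
    induction t with
    | node k a ts ih =>
      rw [run_node, run_node, run_node]
      show (M₁.δ k a _, M₂.δ k a _) = _
      rw [List.map_ofFn, List.map_ofFn]
      congr 2 <;> (apply congrArg List.ofFn; funext i; simp only [Function.comp_apply, ih i])
  refine ⟨Q₁ × Q₂, inferInstance, M, ?_⟩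
  ext t
  constructor
  · rintro (⟨hw, hf⟩ | ⟨hw, hf⟩)
    · exact ⟨hw, show M.run t ∈ M.F by rw [hrun]; exact Or.inl hf⟩
    · exact ⟨hw, show M.run t ∈ M.F by rw [hrun]; exact Or.inr hf⟩
  · rintro ⟨hw, hf⟩
    rw [hrun] at hf
    rcases hf with hf | hf
    · exact Or.inl ⟨hw, hf⟩
    · exact Or.inr ⟨hw, hf⟩
lemma get_ofFn' {α : Type*} {k : ℕ} (f : Fin k → α) (i : Fin k)
    (hi : (i : ℕ) < (List.ofFn f).length) :
    (List.ofFn f).get ⟨i, hi⟩ = f i := by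
  rw [List.get_ofFn]
  exact congrArg f (Fin.ext rfl)

lemma substRel_node_any {g : ℕ → Set UTree} (k b : ℕ) (hb : k = 0 → UTree.leaf b ∈ g b)
    {ts ss : Fin k → UTree} (hts : ∀ i, SubstRel g (ts i) (ss i)) :
    SubstRel g (.node k b ts) (.node k b ss) := by
  match k, ts, ss, hts with
  | 0, ts, ss, _ =>
    rw [node0_eq_leaf, node0_eq_leaf]
    exact .leaf (hb rfl)
  | k+1, ts, ss, hts => exact .node hts

lemma exists_wf_dbua (rk : ℕ → Set ℕ) : ∃ W : DBUA Bool, ∀ t, (W.run t = true ↔ WF rk t) := by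
  classical
  refine ⟨⟨fun k b qs => decide (b ∈ rk k) && qs.all id, ∅⟩, fun t => ?_⟩
  induction t with
  | node k b ts ih =>
    rw [run_node]
    show (decide (b ∈ rk k) && _) = true ↔ _
    rw [Bool.and_eq_true, decide_eq_true_iff, List.all_eq_true]
    constructor
    · rintro ⟨hb, hall⟩
      refine .node hb (fun i => (ih i).1 ?_)
      exact hall _ (List.mem_ofFn.2 ⟨i, rfl⟩)
    · intro hwf
      cases hwf with
      | node hb hts =>
        refine ⟨hb, fun x hx => ?_⟩
        obtain ⟨i, rfl⟩ := List.mem_ofFn.1 hx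
        exact (ih i).2 (hts i)

section Concat

variable {Q₁ : Type} (M₁ : DBUA Q₁) (a : ℕ) (V : Set UTree)

/-- the set of `M₁`-values of preimages of `s` under substitution at `a` by `V`. -/
def preSet (s : UTree) : Set Q₁ :=
  {q | ∃ t, SubstRel (gOf a V) t s ∧ M₁.run t = q}

open Classical in
/-- one step of the bottom-up computation of `preSet`. -/
noncomputable def preA (k b : ℕ) (AS : Fin k → Set Q₁) (inV : Prop) : Set Q₁ :=
  (if k = 0 ∧ b = a then ∅ else
    {q | ∃ f' : Fin k → Q₁, (∀ i, f' i ∈ AS i) ∧ q = M₁.δ k b (List.ofFn f')})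
  ∪ (if inV then {M₁.run (UTree.leaf a)} else ∅)

open Classical in
lemma preSet_node (k b : ℕ) (ss : Fin k → UTree) :
    preSet M₁ a V (.node k b ss) =
      preA M₁ a k b (fun i => preSet M₁ a V (ss i)) (UTree.node k b ss ∈ V) := by
  unfold preA
  ext q
  constructor
  · rintro ⟨t, hsub, rfl⟩
    cases hsub with
    | @leaf c u hg =>
      rcases hg with ⟨rfl, hV⟩ | ⟨hc, heq⟩
      · refine Or.inr ?_
        rw [if_pos hV]
        rfl
      · rw [show UTree.leaf c = UTree.node 0 c Fin.elim0 from rfl] at heq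
        injection heq with h1 h2 h3
        subst h1; subst h2
        refine Or.inl ?_
        rw [if_neg (by simpa using hc)]
        refine ⟨Fin.elim0, fun i => i.elim0, ?_⟩
        show M₁.δ 0 b _ = M₁.δ 0 b _
        rw [List.ofFn_zero, List.ofFn_zero]
    | @node k' c ts ss' hts =>
      refine Or.inl ?_
      rw [if_neg (by simp)]
      exact ⟨fun i => M₁.run (ts i), fun i => ⟨ts i, hts i, rfl⟩, rfl⟩
  · rintro (hq | hq)
    · by_cases hk : k = 0 ∧ b = a
      · rw [if_pos hk] at hq
        exact absurd hq (Set.notMem_empty q)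
      · rw [if_neg hk] at hq
        obtain ⟨f', hf', rfl⟩ := hq
        choose ts hts hrunts using hf'
        refine ⟨UTree.node k b ts, ?_, ?_⟩
        · refine substRel_node_any k b (fun hk0 => ?_) hts
          subst hk0
          exact Or.inr ⟨fun hba => hk ⟨rfl, hba⟩, rfl⟩
        · rw [run_node]
          congr 1
          apply congrArg
          funext i
          exact hrunts i
    · by_cases hV : UTree.node k b ss ∈ V
      · rw [if_pos hV] at hq
        rcases hq with rfl
        exact ⟨UTree.leaf a, .leaf (Or.inl ⟨rfl, hV⟩), rfl⟩
      · rw [if_neg hV] at hq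
        exact absurd hq (Set.notMem_empty q)

end Concat

open Classical in
lemma concat_recognizable (rk : ℕ → Set ℕ) (a : ℕ) (ha : a ∈ rk 0) (U V : Set UTree)
    (hU : RecognizableU rk U) (hV : RecognizableU rk V) :
    RecognizableU rk (concatAt a U V) := by
  classical
  obtain ⟨Q₁, i₁, M₁, rfl⟩ := hU
  obtain ⟨Q₂, i₂, M₂, rfl⟩ := hV
  haveI := i₁; haveI := i₂
  obtain ⟨W, hW⟩ := exists_wf_dbua rk
  set VV : Set UTree := {t | WF rk t ∧ M₂.run t ∈ M₂.F} with hVVdef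
  set M : DBUA (Set Q₁ × Q₂ × Bool) :=
    ⟨fun k b qs =>
      (preA M₁ a k b (fun i => if hi : (i : ℕ) < qs.length then (qs.get ⟨i, hi⟩).1 else ∅)
          (W.δ k b (qs.map (fun x => x.2.2)) = true ∧
            M₂.δ k b (qs.map (fun x => x.2.1)) ∈ M₂.F),
       M₂.δ k b (qs.map (fun x => x.2.1)),
       W.δ k b (qs.map (fun x => x.2.2))),
     {x | ∃ q ∈ x.1, q ∈ M₁.F}⟩ with hMdef
  haveI : Fintype (Set Q₁) := Fintype.ofFinite _
  have hrun : ∀ s, M.run s = (preSet M₁ a VV s, M₂.run s, W.run s) := by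
    intro s
    induction s with
    | node k b ss ih =>
      rw [run_node]
      have hqs : (List.ofFn fun i => M.run (ss i)) =
          List.ofFn (fun i => (preSet M₁ a VV (ss i), M₂.run (ss i), W.run (ss i))) := by
        apply congrArg
        funext i
        exact ih i
      rw [hqs]
      have hsnd : M₂.δ k b ((List.ofFn (fun i => (preSet M₁ a VV (ss i), M₂.run (ss i), W.run (ss i)))).map
          (fun x => x.2.1)) = M₂.run (.node k b ss) := by
        rw [List.map_ofFn, run_node]
        rfl
      have hthd : W.δ k b ((List.ofFn (fun i => (preSet M₁ a VV (ss i), M₂.run (ss i), W.run (ss i)))).map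
          (fun x => x.2.2)) = W.run (.node k b ss) := by
        rw [List.map_ofFn, run_node]
        rfl
      show (_, _, _) = (_, _, _)
      rw [hsnd, hthd]
      refine Prod.ext ?_ rfl
      show preA M₁ a k b _ _ = _
      rw [preSet_node]
      have hAS : (fun i : Fin k => if hi : (i : ℕ) <
            (List.ofFn (fun i => (preSet M₁ a VV (ss i), M₂.run (ss i), W.run (ss i)))).length then
            ((List.ofFn (fun i => (preSet M₁ a VV (ss i), M₂.run (ss i), W.run (ss i)))).get ⟨i, hi⟩).1
          else ∅) = fun i => preSet M₁ a VV (ss i) := by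
        funext i
        have hi : (i : ℕ) <
            (List.ofFn (fun i => (preSet M₁ a VV (ss i), M₂.run (ss i), W.run (ss i)))).length := by
          rw [List.length_ofFn]; exact i.isLt
        rw [dif_pos hi, get_ofFn']
      have hinV : (W.run (.node k b ss) = true ∧ M₂.run (.node k b ss) ∈ M₂.F) =
          (UTree.node k b ss ∈ VV) := by
        apply propext
        rw [hVVdef]
        simp only [Set.mem_setOf_eq, hW]
      rw [hAS, hinV]
  refine ⟨Set Q₁ × Q₂ × Bool, inferInstance, M, ?_⟩
  ext s
  constructor
  · rintro ⟨t, ⟨hwt, hft⟩, hsub⟩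
    have hwfs : WF rk s := wf_subst_forward (fun u hu => hu.1) hwt hsub
    refine ⟨hwfs, ?_⟩
    show M.run s ∈ M.F
    rw [hrun]
    exact ⟨M₁.run t, ⟨t, hsub, rfl⟩, hft⟩
  · rintro ⟨hwfs, hF⟩
    have hF' : M.run s ∈ M.F := hF
    rw [hrun] at hF'
    obtain ⟨q, ⟨t, hsub, rfl⟩, hqF⟩ := hF'
    exact ⟨t, ⟨wf_subst_backward ha hwfs hsub, hqF⟩, hsub⟩
section Clos

variable {Q₁ : Type} (M₁ : DBUA Q₁) (a : ℕ) (V : Set UTree)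

def ImSet (s : UTree) : Set Q₁ :=
  {q | ∃ t, t ≠ UTree.leaf a ∧ SubstRel (gOf a V) t s ∧ M₁.run t = q}

open Classical in
lemma preSet_split (u : UTree) :
    preSet M₁ a V u = ImSet M₁ a V u ∪ (if u ∈ V then {M₁.run (UTree.leaf a)} else ∅) := by
  ext q
  constructor
  · rintro ⟨t, hsub, rfl⟩
    by_cases hne : t = UTree.leaf a
    · subst hne
      rw [substRel_leaf_iff] at hsub
      rcases hsub with ⟨-, hV⟩ | ⟨h, -⟩
      · rw [if_pos hV]
        exact Or.inr rfl
      · exact absurd rfl h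
    · exact Or.inl ⟨t, hne, hsub, rfl⟩
  · rintro (⟨t, hne, hsub, rfl⟩ | hq)
    · exact ⟨t, hsub, rfl⟩
    · by_cases hV : u ∈ V
      · rw [if_pos hV] at hq
        rcases hq with rfl
        exact ⟨UTree.leaf a, .leaf (Or.inl ⟨rfl, hV⟩), rfl⟩
      · rw [if_neg hV] at hq
        exact absurd hq (Set.notMem_empty q)

open Classical in
noncomputable def preB (k b : ℕ) (AS : Fin k → Set Q₁) : Set Q₁ :=
  if k = 0 ∧ b = a then ∅ else
    {q | ∃ f' : Fin k → Q₁, (∀ i, f' i ∈ AS i) ∧ q = M₁.δ k b (List.ofFn f')}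

lemma node_ne_leaf {k b a : ℕ} {ss : Fin k → UTree} (h : ¬(k = 0 ∧ b = a)) :
    UTree.node k b ss ≠ UTree.leaf a := by
  intro heq
  rw [show UTree.leaf a = UTree.node 0 a Fin.elim0 from rfl] at heq
  injection heq with h1 h2 h3
  exact h ⟨h1, h2⟩

open Classical in
lemma ImSet_node (k b : ℕ) (ss : Fin k → UTree) :
    ImSet M₁ a V (.node k b ss) = preB M₁ a k b (fun i => preSet M₁ a V (ss i)) := by
  unfold preB
  ext q
  constructor
  · rintro ⟨t, hne, hsub, rfl⟩
    cases hsub with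
    | @leaf c u hg =>
      rcases hg with ⟨rfl, hV⟩ | ⟨hc, heq⟩
      · exact absurd rfl hne
      · rw [show UTree.leaf c = UTree.node 0 c Fin.elim0 from rfl] at heq
        injection heq with h1 h2 h3
        subst h1; subst h2
        rw [if_neg (by simpa using hc)]
        refine ⟨Fin.elim0, fun i => i.elim0, ?_⟩
        show M₁.δ 0 b _ = M₁.δ 0 b _
        rw [List.ofFn_zero, List.ofFn_zero]
    | @node k' c ts ss' hts =>
      rw [if_neg (by simp)]
      exact ⟨fun i => M₁.run (ts i), fun i => ⟨ts i, hts i, rfl⟩, rfl⟩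
  · intro hq
    by_cases hk : k = 0 ∧ b = a
    · rw [if_pos hk] at hq
      exact absurd hq (Set.notMem_empty q)
    · rw [if_neg hk] at hq
      obtain ⟨f', hf', rfl⟩ := hq
      choose ts hts hrunts using hf'
      refine ⟨UTree.node k b ts, node_ne_leaf hk, ?_, ?_⟩
      · refine substRel_node_any k b (fun hk0 => ?_) hts
        subst hk0
        exact Or.inr ⟨fun hba => hk ⟨rfl, hba⟩, rfl⟩
      · rw [run_node]
        congr 1
        apply congrArg
        funext i
        exact hrunts i

end Clos

lemma memConcatClosure_iff (a : ℕ) (L : Set UTree) (s : UTree) :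
    s ∈ concatClosure a L ↔ s = UTree.leaf a ∨
      ∃ t ∈ L, t ≠ UTree.leaf a ∧ SubstRel (gOf a (concatClosure a L)) t s := by
  constructor
  · intro hs
    obtain ⟨n, hn⟩ := Set.mem_iUnion.1 hs
    clear hs
    induction n generalizing s with
    | zero => exact Or.inl hn
    | succ n ih =>
      obtain ⟨u, hu, hsub⟩ := hn
      rcases ih u hu with rfl | ⟨t, htL, htne, htsub⟩
      · rw [substRel_leaf_iff] at hsub
        rcases hsub with ⟨-, (hL | rfl)⟩ | ⟨h, -⟩
        · by_cases hsa : s = UTree.leaf a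
          · exact Or.inl hsa
          · exact Or.inr ⟨s, hL, hsa,
              SubstRel.gOf_refl (leaf_mem_closure _ L) s⟩
        · exact Or.inl rfl
        · exact absurd rfl h
      · refine Or.inr ⟨t, htL, htne, ?_⟩
        have step := subst_comp_gOf htsub hsub
        refine step.mono (fun b u hu' => ?_)
        rcases hu' with ⟨rfl, hu'⟩ | hu'
        · refine Or.inl ⟨rfl, ?_⟩
          refine concat_closure_self _ L (concat_mono_right _ ?_ hu')
          rintro v (hv | rfl)
          · exact self_subset_closure _ L hv
          · exact leaf_mem_closure _ L
        · exact Or.inr hu'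
  · rintro (rfl | ⟨t, htL, -, htsub⟩)
    · exact leaf_mem_closure a L
    · have : s ∈ concatAt a L (concatClosure a L) := ⟨t, htL, htsub⟩
      rw [clos_eq a L]
      exact Or.inr this

open Classical in
lemma closure_recognizable (rk : ℕ → Set ℕ) (a : ℕ) (ha : a ∈ rk 0) (L : Set UTree)
    (hL : RecognizableU rk L) : RecognizableU rk (concatClosure a L) := by
  classical
  obtain ⟨Q₁, i₁, M₁, rfl⟩ := hL
  haveI := i₁
  obtain ⟨W, hW⟩ := exists_wf_dbua rk
  set LL : Set UTree := {t | WF rk t ∧ M₁.run t ∈ M₁.F} with hLLdef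
  set C : Set UTree := concatClosure a LL with hCdef
  have hLwf : ∀ u ∈ LL, WF rk u := fun u hu => hu.1
  have hCwf : ∀ s ∈ C, WF rk s := closure_wf ha hLwf
  -- membership criterion
  have hcrit : ∀ (k b : ℕ) (ss : Fin k → UTree),
      (UTree.node k b ss ∈ C) ↔
      ((k = 0 ∧ b = a) ∨ (WF rk (UTree.node k b ss) ∧
        ∃ q ∈ ImSet M₁ a C (UTree.node k b ss), q ∈ M₁.F)) := by
    intro k b ss
    rw [hCdef, memConcatClosure_iff]
    constructor
    · rintro (heq | ⟨t, ⟨hwt, hft⟩, hne, hsub⟩)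
      · rw [show UTree.leaf a = UTree.node 0 a Fin.elim0 from rfl] at heq
        injection heq with h1 h2 h3
        exact Or.inl ⟨h1, h2⟩
      · refine Or.inr ⟨wf_subst_forward hCwf hwt hsub, M₁.run t, ⟨t, hne, hsub, rfl⟩, hft⟩
    · rintro (⟨rfl, rfl⟩ | ⟨hwfs, q, ⟨t, hne, hsub, rfl⟩, hqF⟩)
      · exact Or.inl (node0_eq_leaf _ ss)
      · exact Or.inr ⟨t, ⟨wf_subst_backward ha hwfs hsub, hqF⟩, hne, hsub⟩
  set M : DBUA (Set Q₁ × Bool × Bool) :=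
    ⟨fun k b qs =>
      (preB M₁ a k b (fun i => if hi : (i : ℕ) < qs.length then
          ((qs.get ⟨i, hi⟩).1 ∪ (if (qs.get ⟨i, hi⟩).2.1 = true then {M₁.run (UTree.leaf a)} else ∅))
          else ∅),
       decide ((k = 0 ∧ b = a) ∨ (W.δ k b (qs.map (fun x => x.2.2)) = true ∧
          ∃ q ∈ preB M₁ a k b (fun i => if hi : (i : ℕ) < qs.length then
            ((qs.get ⟨i, hi⟩).1 ∪ (if (qs.get ⟨i, hi⟩).2.1 = true then {M₁.run (UTree.leaf a)} else ∅))
            else ∅), q ∈ M₁.F)),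
       W.δ k b (qs.map (fun x => x.2.2))),
     {x | x.2.1 = true}⟩ with hMdef
  haveI : Fintype (Set Q₁) := Fintype.ofFinite _
  have hrun : ∀ s, M.run s = (ImSet M₁ a C s, decide (s ∈ C), W.run s) := by
    intro s
    induction s with
    | node k b ss ih =>
      rw [run_node]
      have hqs : (List.ofFn fun i => M.run (ss i)) =
          List.ofFn (fun i => (ImSet M₁ a C (ss i), decide (ss i ∈ C), W.run (ss i))) := by
        apply congrArg
        funext i
        exact ih i
      rw [hqs]
      have hthd : W.δ k b ((List.ofFn (fun i => (ImSet M₁ a C (ss i), decide (ss i ∈ C), W.run (ss i)))).map (fun x => x.2.2)) = W.run (.node k b ss) := by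
        rw [List.map_ofFn, run_node]
        rfl
      have hAS : (fun i : Fin k => if hi : (i : ℕ) < (List.ofFn (fun i => (ImSet M₁ a C (ss i), decide (ss i ∈ C), W.run (ss i)))).length then
          (((List.ofFn (fun i => (ImSet M₁ a C (ss i), decide (ss i ∈ C), W.run (ss i)))).get ⟨i, hi⟩).1 ∪ (if ((List.ofFn (fun i => (ImSet M₁ a C (ss i), decide (ss i ∈ C), W.run (ss i)))).get ⟨i, hi⟩).2.1 = true then {M₁.run (UTree.leaf a)} else ∅))
          else ∅) = fun i => preSet M₁ a C (ss i) := by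
        funext i
        have hi : (i : ℕ) < (List.ofFn (fun i => (ImSet M₁ a C (ss i), decide (ss i ∈ C), W.run (ss i)))).length := by
          rw [List.length_ofFn]; exact i.isLt
        rw [dif_pos hi, get_ofFn', preSet_split]
        show _ ∪ _ = _ ∪ _
        congr 1
        by_cases hc : ss i ∈ C
        · rw [if_pos hc, if_pos (by simpa using hc)]
        · rw [if_neg hc, if_neg (by simpa using hc)]
      have hIm : preB M₁ a k b (fun i : Fin k => if hi : (i : ℕ) < (List.ofFn (fun i => (ImSet M₁ a C (ss i), decide (ss i ∈ C), W.run (ss i)))).length then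
          (((List.ofFn (fun i => (ImSet M₁ a C (ss i), decide (ss i ∈ C), W.run (ss i)))).get ⟨i, hi⟩).1 ∪ (if ((List.ofFn (fun i => (ImSet M₁ a C (ss i), decide (ss i ∈ C), W.run (ss i)))).get ⟨i, hi⟩).2.1 = true then {M₁.run (UTree.leaf a)} else ∅))
          else ∅) = ImSet M₁ a C (.node k b ss) := by
        rw [hAS, ImSet_node]
      show (_, _, _) = (_, _, _)
      rw [hIm, hthd]
      refine Prod.ext rfl (Prod.ext ?_ rfl)
      show decide _ = decide _
      refine decide_eq_decide.2 ?_
      rw [hcrit k b ss, hW]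
  refine ⟨Set Q₁ × Bool × Bool, inferInstance, M, ?_⟩
  ext s
  constructor
  · intro hs
    refine ⟨hCwf s hs, ?_⟩
    show M.run s ∈ M.F
    rw [hrun]
    exact decide_eq_true hs
  · rintro ⟨hwfs, hF⟩
    have hF' : M.run s ∈ M.F := hF
    rw [hrun] at hF'
    exact of_decide_eq_true hF'
def allSub (P : UTree → Prop) : UTree → Prop
  | .node _ _ ts => ∀ i, P (ts i) ∧ allSub P (ts i)

lemma allSub_node {P : UTree → Prop} {k b : ℕ} {ts : Fin k → UTree} :
    allSub P (.node k b ts) ↔ ∀ i, P (ts i) ∧ allSub P (ts i) := Iff.rfl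

lemma allSub_leaf {P : UTree → Prop} {b : ℕ} : allSub P (.leaf b) :=
  fun i => i.elim0

lemma allSub_of_forall {P : UTree → Prop} (h : ∀ u, P u) (t : UTree) : allSub P t := by
  induction t with
  | node k b ts ih => exact fun i => ⟨h _, ih i⟩

lemma allSub_mono {P P' : UTree → Prop} (h : ∀ u, P u → P' u) :
    ∀ t, allSub P t → allSub P' t := by
  intro t
  induction t with
  | node k b ts ih => exact fun ha i => ⟨h _ (ha i).1, ih i (ha i).2⟩

def tsize : UTree → ℕ
  | .node _ _ ts => 1 + Finset.univ.sum (fun i => tsize (ts i))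

lemma tsize_child_lt {k b : ℕ} {ts : Fin k → UTree} (i : Fin k) :
    tsize (ts i) < tsize (.node k b ts) := by
  show tsize (ts i) < 1 + Finset.univ.sum (fun i => tsize (ts i))
  have : tsize (ts i) ≤ Finset.univ.sum (fun i => tsize (ts i)) :=
    Finset.single_le_sum (f := fun i => tsize (ts i)) (fun j _ => Nat.zero_le _) (Finset.mem_univ i)
  omega

lemma wf_mono {rk rk' : ℕ → Set ℕ} (h : ∀ k, rk k ⊆ rk' k) {t : UTree} (ht : WF rk t) :
    WF rk' t := by
  induction ht with
  | node hb hts ih => exact .node (h _ hb) ih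

section Part2

variable {Q : Type} (rk : ℕ → Set ℕ) (M : DBUA Q) (c : Q → ℕ)

open Classical in
noncomputable def erun : UTree → Q
  | .node k b ts =>
    if h : ∃ q, k = 0 ∧ b = c q then h.choose
    else M.δ k b (List.ofFn fun i => erun (ts i))

def rkE (H : Set Q) : ℕ → Set ℕ := fun k => if k = 0 then rk 0 ∪ c '' H else rk k

def isHole (t : UTree) : Prop := ∃ q, t = UTree.leaf (c q)

def G (S H : Set Q) (q : Q) : Set UTree :=
  {t | WF (rkE rk c H) t ∧ erun M c t = q ∧
    allSub (fun u => isHole c u ∨ erun M c u ∈ S) t}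

variable {c}

open Classical in
lemma erun_hole (hinj : Function.Injective c) (q : Q) :
    erun M c (.leaf (c q)) = q := by
  show dite _ _ _ = q
  rw [dif_pos ⟨q, rfl, rfl⟩]
  exact (hinj (⟨q, rfl, rfl⟩ : ∃ q', (0:ℕ) = 0 ∧ c q = c q').choose_spec.2).symm

open Classical in
lemma erun_node_succ (k b : ℕ) (ts : Fin (k+1) → UTree) :
    erun M c (.node (k+1) b ts) = M.δ (k+1) b (List.ofFn fun i => erun M c (ts i)) := by
  show dite _ _ _ = _
  rw [dif_neg]
  rintro ⟨q, hq, -⟩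
  exact Nat.succ_ne_zero k hq

open Classical in
lemma erun_node_not_hole {k b : ℕ} (hb : ¬ ∃ q, k = 0 ∧ b = c q) (ts : Fin k → UTree) :
    erun M c (.node k b ts) = M.δ k b (List.ofFn fun i => erun M c (ts i)) := by
  show dite _ _ _ = _
  rw [dif_neg hb]

lemma erun_eq_run {rk : ℕ → Set ℕ} (hfresh : ∀ q k, c q ∉ rk k) {t : UTree}
    (ht : WF rk t) : erun M c t = M.run t := by
  induction ht with
  | @node k b ts hb hts ih =>
    rw [erun_node_not_hole M (fun ⟨q, hk, hq⟩ => hfresh q k (hq ▸ hb)), run_node]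
    congr 1
    apply congrArg
    funext i
    exact ih i

lemma rkE_empty : rkE rk c ∅ = rk := by
  funext k
  unfold rkE
  by_cases hk : k = 0
  · subst hk; simp
  · rw [if_neg hk]

lemma rkE_mono {H H' : Set Q} (h : H ⊆ H') (k : ℕ) : rkE rk c H k ⊆ rkE rk c H' k := by
  unfold rkE
  by_cases hk : k = 0
  · subst hk
    simp only [if_pos]
    exact Set.union_subset_union_right _ (Set.image_mono (f := c) h)
  · rw [if_neg hk, if_neg hk]

lemma mem_rkE_zero {H : Set Q} {b : ℕ} :
    b ∈ rkE rk c H 0 ↔ b ∈ rk 0 ∨ ∃ h ∈ H, b = c h := by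
  unfold rkE
  rw [if_pos rfl]
  constructor
  · rintro (hb | ⟨h, hh, rfl⟩)
    · exact Or.inl hb
    · exact Or.inr ⟨h, hh, rfl⟩
  · rintro (hb | ⟨h, hh, rfl⟩)
    · exact Or.inl hb
    · exact Or.inr ⟨h, hh, rfl⟩

lemma rkE_succ {H : Set Q} (k : ℕ) : rkE rk c H (k+1) = rk (k+1) := by
  unfold rkE
  rw [if_neg (Nat.succ_ne_zero k)]

lemma G_mono_S {S S' H : Set Q} (h : S ⊆ S') (q : Q) :
    G rk M c S H q ⊆ G rk M c S' H q := by
  rintro t ⟨h1, h2, h3⟩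
  refine ⟨h1, h2, allSub_mono (fun u hu => ?_) t h3⟩
  rcases hu with hu | hu
  · exact Or.inl hu
  · exact Or.inr (h hu)

lemma G_mono_H {S H H' : Set Q} (h : H ⊆ H') (q : Q) :
    G rk M c S H q ⊆ G rk M c S H' q := by
  rintro t ⟨h1, h2, h3⟩
  exact ⟨wf_mono (rkE_mono rk h) h1, h2, h3⟩

end Part2
section Part2b

variable {Q : Type} (rk : ℕ → Set ℕ) (M : DBUA Q) {c : Q → ℕ}

lemma wf_leaf {rk' : ℕ → Set ℕ} {b : ℕ} (hb : b ∈ rk' 0) : WF rk' (.leaf b) :=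
  .node hb (fun i => i.elim0)

lemma hole_label_mem (hinj : Function.Injective c) (hfresh : ∀ q k, c q ∉ rk k)
    {H : Set Q} {h' : Q} (hb : c h' ∈ rkE rk c H 0) : h' ∈ H := by
  rcases (mem_rkE_zero rk).1 hb with hc | ⟨h, hh, heqc⟩
  · exact absurd hc (hfresh h' 0)
  · rwa [hinj heqc]

lemma G_empty_finite [Fintype Q] (hinj : Function.Injective c) (hfresh : ∀ q k, c q ∉ rk k)
    (hSig : (⋃ k, rk k).Finite) (hK : {k | (rk k).Nonempty}.Finite)
    (H : Set Q) (q : Q) : (G rk M c ∅ H q).Finite := by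
  classical
  have hrk : ∀ k, (rk k).Finite := fun k => hSig.subset (Set.subset_iUnion _ k)
  have hrkE : ∀ k, (rkE rk c H k).Finite := by
    intro k
    unfold rkE
    by_cases hk : k = 0
    · subst hk
      rw [if_pos rfl]
      exact (hrk 0).union ((Set.toFinite H).image c)
    · rw [if_neg hk]
      exact hrk k
  have hK' : (insert 0 {k | (rk k).Nonempty} : Set ℕ).Finite := hK.insert 0
  refine Set.Finite.subset
    (hK'.biUnion (fun k _ => (hrkE k).biUnion (fun b _ => Set.finite_range
      (fun f : Fin k → ↥H => UTree.node k b (fun i => UTree.leaf (c (f i : Q))))))) ?_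
  rintro t ⟨hwf, -, hall⟩
  cases hwf with
  | @node k b ts hb hts =>
    have hch : ∀ i, ∃ h : ↥H, ts i = UTree.leaf (c (h : Q)) := by
      intro i
      rcases (hall i).1 with ⟨qi, hqi⟩ | hin
      · have hwfc := hts i
        rw [hqi] at hwfc
        cases hwfc with
        | node hb' _ =>
          exact ⟨⟨qi, hole_label_mem rk hinj hfresh hb'⟩, hqi⟩
      · exact absurd hin (Set.notMem_empty _)
    choose f hf using hch
    have hkK : k ∈ (insert 0 {k | (rk k).Nonempty} : Set ℕ) := by
      by_cases hk : k = 0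
      · exact Or.inl hk
      · refine Or.inr ?_
        obtain ⟨m, rfl⟩ := Nat.exists_eq_succ_of_ne_zero hk
        rw [rkE_succ rk] at hb
        exact ⟨b, hb⟩
    refine Set.mem_biUnion hkK (Set.mem_biUnion hb ⟨f, ?_⟩)
    show UTree.node k b _ = UTree.node k b ts
    congr 1
    funext i
    exact (hf i).symm

lemma cut (hinj : Function.Injective c) (hfresh : ∀ q k, c q ∉ rk k)
    {S H : Set Q} {p : Q} (hpH : p ∉ H) :
    ∀ t, WF (rkE rk c H) t →
      allSub (fun u => isHole c u ∨ erun M c u ∈ insert p S) t →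
    ∃ top, top ∈ G rk M c S (insert p H) (erun M c t) ∧
      SubstRel (gOf (c p) (G rk M c (insert p S) H p ∩ {u | tsize u < tsize t})) top t := by
  intro t
  induction t with
  | node k b ts ih =>
    intro hwf halls
    have hwf0 := hwf
    cases hwf with
    | node hb hts =>
      by_cases hhole : isHole c (UTree.node k b ts)
      · obtain ⟨h', heq⟩ := hhole
        have hk0 : c h' ∈ rkE rk c H 0 := by
          rw [heq] at hwf0
          cases hwf0 with
          | node hb' _ => exact hb'
        have hH : h' ∈ H := hole_label_mem rk hinj hfresh hk0
        have hne : c h' ≠ c p := fun hcc => hpH (hinj hcc ▸ hH)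
        refine ⟨UTree.node k b ts,
          ⟨wf_mono (rkE_mono rk (Set.subset_insert p H)) hwf0, rfl, ?_⟩, ?_⟩
        · rw [heq]; exact allSub_leaf
        · rw [heq]
          exact .leaf (Or.inr ⟨hne, rfl⟩)
      · have hguard : ¬ ∃ q', k = 0 ∧ b = c q' := by
          rintro ⟨q', hk0, rfl⟩
          subst hk0
          exact hhole ⟨q', node0_eq_leaf _ ts⟩
        have hstep : ∀ i, ∃ u, u ∈ G rk M c S (insert p H) (erun M c (ts i)) ∧
            (isHole c u ∨ erun M c u ∈ S) ∧
            SubstRel (gOf (c p) (G rk M c (insert p S) H p ∩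
              {v | tsize v < tsize (UTree.node k b ts)})) u (ts i) := by
          intro i
          by_cases hih : isHole c (ts i)
          · obtain ⟨h', heq⟩ := hih
            have hk0 : c h' ∈ rkE rk c H 0 := by
              have hwfc := hts i
              rw [heq] at hwfc
              cases hwfc with
              | node hb' _ => exact hb'
            have hH : h' ∈ H := hole_label_mem rk hinj hfresh hk0
            have hne : c h' ≠ c p := fun hcc => hpH (hinj hcc ▸ hH)
            refine ⟨ts i, ⟨wf_mono (rkE_mono rk (Set.subset_insert p H)) (hts i), rfl, ?_⟩,
              Or.inl ⟨h', heq⟩, ?_⟩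
            · rw [heq]; exact allSub_leaf
            · rw [heq]
              exact .leaf (Or.inr ⟨hne, rfl⟩)
          · by_cases herun : erun M c (ts i) = p
            · refine ⟨UTree.leaf (c p),
                ⟨wf_leaf ((mem_rkE_zero rk).2 (Or.inr ⟨p, Set.mem_insert p H, rfl⟩)),
                 by rw [erun_hole M hinj]; exact herun.symm, allSub_leaf⟩,
                Or.inl ⟨p, rfl⟩, ?_⟩
              exact .leaf (Or.inl ⟨rfl, ⟨⟨hts i, herun, (halls i).2⟩, tsize_child_lt i⟩⟩)
            · have hS : erun M c (ts i) ∈ S := by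
                rcases (halls i).1 with h | h
                · exact absurd h hih
                · rcases Set.mem_insert_iff.1 h with h' | h'
                  · exact absurd h' herun
                  · exact h'
              obtain ⟨u, hu1, hu3⟩ := ih i (hts i) (halls i).2
              refine ⟨u, hu1, Or.inr (hu1.2.1 ▸ hS), hu3.mono (fun b' v hv => ?_)⟩
              rcases hv with ⟨rfl, hv1, hv2⟩ | hv
              · exact Or.inl ⟨rfl, hv1, lt_trans hv2 (tsize_child_lt i)⟩
              · exact Or.inr hv
        choose tops h1 h2 h3 using hstep
        have hbE : b ∈ rkE rk c (insert p H) k := by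
          by_cases hk : k = 0
          · subst hk
            have hb0 : b ∈ rk 0 := by
              rcases (mem_rkE_zero rk).1 hb with h | ⟨h, hh, rfl⟩
              · exact h
              · exact absurd ⟨h, rfl, rfl⟩ hguard
            exact (mem_rkE_zero rk).2 (Or.inl hb0)
          · obtain ⟨m, rfl⟩ := Nat.exists_eq_succ_of_ne_zero hk
            rw [rkE_succ rk] at hb ⊢
            exact hb
        refine ⟨UTree.node k b tops, ⟨.node hbE (fun i => (h1 i).1), ?_, ?_⟩, ?_⟩
        · rw [erun_node_not_hole M hguard, erun_node_not_hole M hguard]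
          congr 1
          apply congrArg
          funext i
          exact (h1 i).2.1
        · exact fun i => ⟨h2 i, (h1 i).2.2⟩
        · refine substRel_node_any k b (fun hk0 => ?_) h3
          subst hk0
          have hb0 : b ∈ rk 0 := by
            rcases (mem_rkE_zero rk).1 hb with h | ⟨h, hh, rfl⟩
            · exact h
            · exact absurd ⟨h, rfl, rfl⟩ hguard
          exact Or.inr ⟨fun hbc => hfresh p 0 (hbc ▸ hb0), rfl⟩

lemma paste (hinj : Function.Injective c) (hfresh : ∀ q k, c q ∉ rk k)
    {S H : Set Q} {p : Q} (hpH : p ∉ H) :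
    ∀ {top t : UTree}, SubstRel (gOf (c p) (G rk M c (insert p S) H p)) top t →
    WF (rkE rk c (insert p H)) top →
    allSub (fun u => isHole c u ∨ erun M c u ∈ S) top →
    WF (rkE rk c H) t ∧ erun M c t = erun M c top ∧
      allSub (fun u => isHole c u ∨ erun M c u ∈ insert p S) t := by
  intro top t hsub
  induction hsub with
  | @leaf b u hg =>
    intro hwf _
    rcases hg with ⟨rfl, hfill⟩ | ⟨hb, rfl⟩
    · obtain ⟨h1, h2, h3⟩ := hfill
      exact ⟨h1, by rw [h2, erun_hole M hinj], h3⟩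
    · refine ⟨?_, rfl, allSub_leaf⟩
      have hb' : b ∈ rkE rk c (insert p H) 0 := by
        cases hwf with
        | node hb' _ => exact hb'
      rcases (mem_rkE_zero rk).1 hb' with h | ⟨h, hh, rfl⟩
      · exact wf_leaf ((mem_rkE_zero rk).2 (Or.inl h))
      · rcases Set.mem_insert_iff.1 hh with rfl | hh'
        · exact absurd rfl hb
        · exact wf_leaf ((mem_rkE_zero rk).2 (Or.inr ⟨h, hh', rfl⟩))
  | @node k b ts ss hsubs ih =>
    intro hwf hall
    have hb : b ∈ rkE rk c (insert p H) (k+1) := by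
      cases hwf with
      | node hb _ => exact hb
    have hts : ∀ i, WF (rkE rk c (insert p H)) (ts i) := by
      cases hwf with
      | node _ hts => exact hts
    have hchild : ∀ i, WF (rkE rk c H) (ss i) ∧ erun M c (ss i) = erun M c (ts i) ∧
        (isHole c (ss i) ∨ erun M c (ss i) ∈ insert p S) ∧
        allSub (fun u => isHole c u ∨ erun M c u ∈ insert p S) (ss i) := by
      intro i
      by_cases hih : isHole c (ts i)
      · obtain ⟨h', heq⟩ := hih
        have hsubi := hsubs i
        rw [heq, substRel_leaf_iff] at hsubi
        rcases hsubi with ⟨hcc, hfill⟩ | ⟨hne', heq2⟩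
        · obtain ⟨F1, F2, F3⟩ := hfill
          have hp : h' = p := hinj hcc
          refine ⟨F1, ?_, Or.inr (by rw [F2]; exact Set.mem_insert p S), F3⟩
          rw [F2, heq, hp, erun_hole M hinj]
        · have hk0 : c h' ∈ rkE rk c (insert p H) 0 := by
            have hwfc := hts i
            rw [heq] at hwfc
            cases hwfc with
            | node hb' _ => exact hb'
          have hH : h' ∈ insert p H := hole_label_mem rk hinj hfresh hk0
          have hH' : h' ∈ H := by
            rcases Set.mem_insert_iff.1 hH with h'' | h''
            · exact absurd (congrArg c h'') hne'
            · exact h''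
          refine ⟨?_, ?_, Or.inl ⟨h', heq2⟩, ?_⟩
          · rw [heq2]
            exact wf_leaf ((mem_rkE_zero rk).2 (Or.inr ⟨h', hH', rfl⟩))
          · rw [heq2, heq]
          · rw [heq2]
            exact allSub_leaf
      · have hS : erun M c (ts i) ∈ S := by
          rcases (hall i).1 with h | h
          · exact absurd h hih
          · exact h
        obtain ⟨W, E, A⟩ := ih i (hts i) (hall i).2
        exact ⟨W, E, Or.inr (by rw [E]; exact Set.mem_insert_of_mem p hS), A⟩
    refine ⟨.node (by rw [rkE_succ rk] at hb ⊢; exact hb) (fun i => (hchild i).1), ?_,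
      fun i => ⟨(hchild i).2.2.1, (hchild i).2.2.2⟩⟩
    rw [erun_node_succ, erun_node_succ]
    congr 1
    apply congrArg
    funext i
    exact (hchild i).2.1

end Part2b
section Part2c

variable {Q : Type} (rk : ℕ → Set ℕ) (M : DBUA Q) {c : Q → ℕ}

lemma G_step1 (hinj : Function.Injective c) (hfresh : ∀ q k, c q ∉ rk k)
    {S H : Set Q} {p : Q} (hpH : p ∉ H) (q : Q) :
    G rk M c (insert p S) H q =
      concatAt (c p) (G rk M c S (insert p H) q) (G rk M c (insert p S) H p) := by
  apply Set.Subset.antisymm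
  · rintro t ⟨hwf, herun, hall⟩
    obtain ⟨top, htop, hsub⟩ := cut rk M hinj hfresh hpH t hwf hall
    rw [herun] at htop
    refine ⟨top, htop, hsub.mono (fun b u hu => ?_)⟩
    rcases hu with ⟨rfl, h1, -⟩ | h
    · exact Or.inl ⟨rfl, h1⟩
    · exact Or.inr h
  · rintro t ⟨top, ⟨hw, he, ha⟩, hsub⟩
    obtain ⟨W, E, A⟩ := paste rk M hinj hfresh hpH hsub hw ha
    exact ⟨W, by rw [E, he], A⟩

lemma G_step2 (hinj : Function.Injective c) (hfresh : ∀ q k, c q ∉ rk k)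
    {S H : Set Q} {p : Q} (hpH : p ∉ H) :
    G rk M c (insert p S) H p = concatAt (c p)
      (concatClosure (c p) (G rk M c S (insert p H) p)) (G rk M c S H p) := by
  have hpaste : ∀ q', concatAt (c p) (G rk M c S (insert p H) q')
      (G rk M c (insert p S) H p) ⊆ G rk M c (insert p S) H q' := by
    rintro q' t ⟨top, ⟨hw, he, ha⟩, hsub⟩
    obtain ⟨W, E, A⟩ := paste rk M hinj hfresh hpH hsub hw ha
    exact ⟨W, by rw [E, he], A⟩
  apply Set.Subset.antisymm
  · have main : ∀ n t, tsize t < n → t ∈ G rk M c (insert p S) H p →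
        t ∈ concatAt (c p) (concatClosure (c p) (G rk M c S (insert p H) p))
          (G rk M c S H p) := by
      intro n
      induction n with
      | zero => exact fun t h _ => absurd h (Nat.not_lt_zero _)
      | succ n ihn =>
        rintro t hlt ⟨hwf, herun, hall⟩
        obtain ⟨top, htop, hsub⟩ := cut rk M hinj hfresh hpH t hwf hall
        rw [herun] at htop
        have hsub' : SubstRel (gOf (c p) (concatAt (c p)
            (concatClosure (c p) (G rk M c S (insert p H) p)) (G rk M c S H p))) top t := by
          refine hsub.mono (fun b u hu => ?_)
          rcases hu with ⟨rfl, h1, h2⟩ | h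
          · exact Or.inl ⟨rfl, ihn u (Nat.lt_of_lt_of_le h2 (Nat.lt_succ_iff.1 hlt)) h1⟩
          · exact Or.inr h
        have ht : t ∈ concatAt (c p) (G rk M c S (insert p H) p)
            (concatAt (c p) (concatClosure (c p) (G rk M c S (insert p H) p))
              (G rk M c S H p)) := ⟨top, htop, hsub'⟩
        rw [← concat_assoc] at ht
        refine concat_mono_left _ ?_ ht
        intro u hu
        exact concat_closure_self _ _ (concat_mono_left _ (self_subset_closure _ _) hu)
    exact fun t ht => main (tsize t + 1) t (Nat.lt_succ_self _) ht
  · have hBT : G rk M c S H p ⊆ G rk M c (insert p S) H p :=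
      G_mono_S rk M (Set.subset_insert p S) p
    have hclaim : ∀ n, concatAt (c p) (closIter (c p) (G rk M c S (insert p H) p) n)
        (G rk M c (insert p S) H p) ⊆ G rk M c (insert p S) H p := by
      intro n
      induction n with
      | zero =>
        rw [show closIter (c p) (G rk M c S (insert p H) p) 0 = {UTree.leaf (c p)} from rfl,
          concat_leaf_left]
      | succ n ihn =>
        show concatAt (c p) (concatAt (c p) _ _) _ ⊆ _
        rw [concat_assoc]
        refine subset_trans (concat_mono_right _ ?_) ihn
        rw [concat_union_left, concat_leaf_left]
        exact Set.union_subset (hpaste p) subset_rfl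
    rintro t ⟨u, hu, hsub⟩
    obtain ⟨n, hn⟩ := Set.mem_iUnion.1 hu
    refine hclaim n ⟨u, hn, hsub.mono (fun b v hv => ?_)⟩
    rcases hv with ⟨rfl, hv⟩ | hv
    · exact Or.inl ⟨rfl, hBT hv⟩
    · exact Or.inr hv

lemma G_in_C [Fintype Q] (hinj : Function.Injective c) (hfresh : ∀ q k, c q ∉ rk k)
    (hSig : (⋃ k, rk k).Finite) (hK : {k | (rk k).Nonempty}.Finite)
    (C : Set (Set UTree)) (hfin : ∀ L : Set UTree, L.Finite → L ∈ C)
    (hconcat : ∀ (a : ℕ) (U V : Set UTree), U ∈ C → V ∈ C → concatAt a U V ∈ C)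
    (hclos : ∀ (a : ℕ) (L : Set UTree), L ∈ C → concatClosure a L ∈ C) :
    ∀ (n : ℕ) (S H : Finset Q), S.card = n → (∀ x ∈ S, x ∉ H) →
      ∀ q, G rk M c ↑S ↑H q ∈ C := by
  classical
  intro n
  induction n with
  | zero =>
    intro S H hcard hdisj q
    rw [Finset.card_eq_zero] at hcard
    subst hcard
    rw [Finset.coe_empty]
    exact hfin _ (G_empty_finite rk M hinj hfresh hSig hK _ q)
  | succ n ihn =>
    intro S H hcard hdisj q
    obtain ⟨p, S', hpS', hSeq, hcard'⟩ := Finset.card_eq_succ.1 hcard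
    subst hSeq
    have hpH : p ∉ (↑H : Set Q) := fun h => hdisj p (Finset.mem_insert_self p S') h
    have hd1 : ∀ x ∈ S', x ∉ insert p H := by
      intro x hx hmem
      rcases Finset.mem_insert.1 hmem with rfl | hmem'
      · exact hpS' hx
      · exact hdisj x (Finset.mem_insert_of_mem hx) hmem'
    have hd2 : ∀ x ∈ S', x ∉ H := fun x hx => hdisj x (Finset.mem_insert_of_mem hx)
    rw [Finset.coe_insert, G_step1 rk M hinj hfresh hpH q, G_step2 rk M hinj hfresh hpH]
    rw [show (insert p (↑H : Set Q)) = ↑(insert p H) from (Finset.coe_insert p H).symm]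
    exact hconcat _ _ _ (ihn S' (insert p H) hcard' hd1 q)
      (hconcat _ _ _ (hclos _ _ (ihn S' (insert p H) hcard' hd1 p))
        (ihn S' H hcard' hd2 p))

end Part2c

lemma recog_in_class (C : Set (Set UTree))
    (hfin : ∀ L : Set UTree, L.Finite → L ∈ C)
    (hunion : ∀ U V, U ∈ C → V ∈ C → U ∪ V ∈ C)
    (hconcat : ∀ (a : ℕ) (U V : Set UTree), U ∈ C → V ∈ C → concatAt a U V ∈ C)
    (hclos : ∀ (a : ℕ) (L : Set UTree), L ∈ C → concatClosure a L ∈ C)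
    (rk : ℕ → Set ℕ) (hrk : IsRankedAlphabet rk) (L : Set UTree)
    (hL : RecognizableU rk L) : L ∈ C := by
  classical
  obtain ⟨Q, iQ, M, rfl⟩ := hL
  haveI := iQ
  obtain ⟨hSig, hK⟩ := hrk
  obtain ⟨N, hN⟩ : ∃ N, ∀ x ∈ ⋃ k, rk k, x ≤ N := by
    obtain ⟨N, hN⟩ := hSig.bddAbove
    exact ⟨N, fun x hx => hN hx⟩
  set c : Q → ℕ := fun q => N + 1 + ((Fintype.equivFin Q) q : ℕ) with hcdef
  have hinj : Function.Injective c := by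
    intro q1 q2 h
    have h' : N + 1 + ((Fintype.equivFin Q) q1 : ℕ) = N + 1 + ((Fintype.equivFin Q) q2 : ℕ) := h
    exact (Fintype.equivFin Q).injective (Fin.ext (Nat.add_left_cancel h'))
  have hfresh : ∀ q k, c q ∉ rk k := by
    intro q k hmem
    have h1 : c q ≤ N := hN _ (Set.mem_iUnion.2 ⟨k, hmem⟩)
    have h2 : N + 1 + ((Fintype.equivFin Q) q : ℕ) ≤ N := h1
    omega
  have hGfull : ∀ q, G rk M c (↑(Finset.univ : Finset Q)) (↑(∅ : Finset Q)) q =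
      {t | WF rk t ∧ M.run t = q} := by
    intro q
    ext t
    constructor
    · rintro ⟨hwf, herun, -⟩
      rw [Finset.coe_empty, rkE_empty rk] at hwf
      exact ⟨hwf, by rw [← erun_eq_run M hfresh hwf, herun]⟩
    · rintro ⟨hwf, hrun⟩
      refine ⟨?_, ?_, allSub_of_forall (fun u => Or.inr (Finset.mem_coe.2 (Finset.mem_univ _))) t⟩
      · rw [Finset.coe_empty, rkE_empty rk]
        exact hwf
      · rw [erun_eq_run M hfresh hwf]
        exact hrun
  have hGC : ∀ q, G rk M c ↑(Finset.univ : Finset Q) ↑(∅ : Finset Q) q ∈ C :=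
    fun q => G_in_C rk M hinj hfresh hSig hK C hfin hconcat hclos
      (Finset.univ.card) Finset.univ ∅ rfl (fun x _ h => absurd h (Finset.notMem_empty x)) q
  set FS : Finset Q := Finset.univ.filter (fun q => q ∈ M.F) with hFS
  have hunionC : ∀ fs : Finset Q,
      (⋃ q ∈ fs, G rk M c ↑(Finset.univ : Finset Q) ↑(∅ : Finset Q) q) ∈ C := by
    intro fs
    induction fs using Finset.induction_on with
    | empty =>
      have : (⋃ q ∈ (∅ : Finset Q), G rk M c ↑(Finset.univ : Finset Q) ↑(∅ : Finset Q) q)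
          = (∅ : Set UTree) := by simp
      rw [this]
      exact hfin ∅ Set.finite_empty
    | @insert x fs hx ih =>
      rw [Finset.set_biUnion_insert]
      exact hunion _ _ (hGC x) ih
  have hfinal : {t | WF rk t ∧ M.run t ∈ M.F} =
      ⋃ q ∈ FS, G rk M c ↑(Finset.univ : Finset Q) ↑(∅ : Finset Q) q := by
    ext t
    constructor
    · rintro ⟨hwf, hF⟩
      refine Set.mem_biUnion (Finset.mem_coe.2 (Finset.mem_filter.2 ⟨Finset.mem_univ _, hF⟩)) ?_
      rw [hGfull]
      exact ⟨hwf, rfl⟩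
    · intro ht
      obtain ⟨q, hq, htq⟩ := Set.mem_iUnion₂.1 ht
      rw [hGfull] at htq
      refine ⟨htq.1, ?_⟩
      rw [htq.2]
      exact (Finset.mem_filter.1 hq).2
  rw [hfinal]
  exact hunionC FS

/-- Theorem 3.43: the recognizable tree languages form the smallest class of tree
languages containing the finite tree languages and closed under union, tree
concatenation and tree concatenation closure. -/
theorem recognizable_smallest_class :
    -- (1) RECOG contains the finite tree languages and has the closure properties
    (∀ rk, IsRankedAlphabet rk →
      ∀ L : Set UTree, L.Finite → (∀ t ∈ L, WF rk t) → RecognizableU rk L) ∧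
    (∀ rk, IsRankedAlphabet rk →
      ∀ U V, RecognizableU rk U → RecognizableU rk V → RecognizableU rk (U ∪ V)) ∧
    (∀ rk, IsRankedAlphabet rk → ∀ a ∈ rk 0,
      ∀ U V, RecognizableU rk U → RecognizableU rk V → RecognizableU rk (concatAt a U V)) ∧
    (∀ rk, IsRankedAlphabet rk → ∀ a ∈ rk 0,
      ∀ L, RecognizableU rk L → RecognizableU rk (concatClosure a L)) ∧
    -- (2) any class of tree languages with these properties contains RECOG
    (∀ C : Set (Set UTree),
      (∀ L : Set UTree, L.Finite → L ∈ C) →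
      (∀ U V, U ∈ C → V ∈ C → U ∪ V ∈ C) →
      (∀ (a : ℕ) (U V : Set UTree), U ∈ C → V ∈ C → concatAt a U V ∈ C) →
      (∀ (a : ℕ) (L : Set UTree), L ∈ C → concatClosure a L ∈ C) →
      ∀ rk, IsRankedAlphabet rk → ∀ L, RecognizableU rk L → L ∈ C) := by
  refine ⟨?_, ?_, ?_, ?_, ?_⟩
  · intro rk _ L hfin hwf
    exact finite_recognizable rk L hfin hwf
  · intro rk _ U V hU hV
    exact union_recognizable rk U V hU hV
  · intro rk _ a ha U V hU hV
    exact concat_recognizable rk a ha U V hU hV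
  · intro rk _ a ha L hL
    exact closure_recognizable rk a ha L hL
  · intro C hfin hunion hconcat hclos rk hrk L hL
    exact recog_in_class C hfin hunion hconcat hclos rk hrk L hL
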